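/- Let n > 1 be an integer with radical n₀. Then F_n'(-1) = ∑_{1 ≤ k ≤ n, gcd(k,n)=1} (-1)^{k-1}·k equals n·φ(n)/2 if n is even, and equals μ(n₀)·φ(n₀)/2 if n is odd. -/

import Mathlib

open Polynomial

open Finset ArithmeticFunction
open scoped ArithmeticFunction.Moebius

/-- Fekete polynomial of the principal Dirichlet character mod `n`. -/
noncomputable def Fek (n : ℕ) : Polynomial ℤ :=
  ∑ a ∈ Finset.range n, if Nat.gcd a n = 1 then X ^ a else 0

lemma gcdSub (n k : ℕ) (hk : k ≤ n) : Nat.gcd (n - k) n = Nat.gcd k n := by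
  obtain ⟨a, rfl⟩ : ∃ a, n = a + k := ⟨n - k, by omega⟩
  rw [Nat.add_sub_cancel]
  rw [Nat.gcd_self_add_right, Nat.gcd_add_self_right, Nat.gcd_comm]


lemma altSum (m : ℕ) :
    2 * ∑ j ∈ Finset.Icc 1 m, (-1 : ℤ) ^ (j - 1) * j =
      if Even m then -(m : ℤ) else (m : ℤ) + 1 := by
  induction m with
  | zero => simp
  | succ m ih =>
    rw [Finset.sum_Icc_succ_top (by omega : 1 ≤ m + 1), mul_add, ih]
    rcases Nat.even_or_odd m with h | h
    · rw [if_pos h, if_neg (by simp [Nat.even_add_one, h])]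
      have hp : (-1 : ℤ) ^ (m + 1 - 1) = 1 := by simpa using Even.neg_one_pow h
      rw [hp]; push_cast; ring
    · rw [if_neg (Nat.not_even_iff_odd.mpr h),
        if_pos (Nat.even_add_one.mpr (Nat.not_even_iff_odd.mpr h))]
      have hp : (-1 : ℤ) ^ (m + 1 - 1) = -1 := by simpa using Odd.neg_one_pow h
      rw [hp]; push_cast; ring

lemma radAux (s : Finset ℕ) (hs : ∀ p ∈ s, p.Prime) :
    Squarefree (∏ p ∈ s, p) ∧
      (μ (∏ p ∈ s, p) : ℤ) * ((∏ p ∈ s, p).totient : ℤ) = ∏ p ∈ s, (1 - (p : ℤ)) := by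
  classical
  induction s using Finset.induction_on with
  | empty => simp
  | @insert a s ha ih =>
    have hps : ∀ p ∈ s, p.Prime := fun p hp => hs p (mem_insert_of_mem hp)
    have hpa : a.Prime := hs a (mem_insert_self a s)
    obtain ⟨ihsq, ihmu⟩ := ih hps
    have hcop : Nat.Coprime a (∏ p ∈ s, p) :=
      Nat.Coprime.prod_right fun p hp =>
        (Nat.coprime_primes hpa (hps p hp)).mpr fun h => ha (h ▸ hp)
    rw [Finset.prod_insert ha, Finset.prod_insert ha]
    constructor
    · exact (Nat.squarefree_mul hcop).mpr ⟨hpa.squarefree, ihsq⟩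
    · rw [isMultiplicative_moebius.map_mul_of_coprime hcop,
        Nat.totient_mul hcop, moebius_apply_prime hpa, Nat.totient_prime hpa]
      push_cast [Nat.cast_sub hpa.one_lt.le]
      linear_combination ((1 : ℤ) - a) * ihmu

lemma sumMoebius (m : ℕ) : ∑ d ∈ m.divisors, (μ d : ℤ) = if m = 1 then 1 else 0 := by
  rw [← coe_mul_zeta_apply, moebius_mul_coe_zeta, one_apply]

lemma powOdd (d j : ℕ) (hd : ¬ 2 ∣ d) (hj : 1 ≤ j) :
    (-1 : ℤ) ^ (d * j - 1) = (-1 : ℤ) ^ (j - 1) := by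
  have e : d * j = (d - 1) * j + j := by
    conv_lhs => rw [show d = d - 1 + 1 by omega]
    rw [Nat.succ_mul]
  have hd1 : Even (d - 1) := ⟨(d - 1) / 2, by omega⟩
  rw [e, show (d - 1) * j + j - 1 = (d - 1) * j + (j - 1) by omega, pow_add,
    Even.neg_one_pow (hd1.mul_right j), one_mul]


theorem stmt6 (n : ℕ) (hn : 1 < n) (n₀ : ℕ) (hn₀ : n₀ = ∏ p ∈ n.primeFactors, p) :
    ((derivative (Fek n)).eval (-1) =
      ∑ k ∈ (Finset.Icc 1 n).filter (fun k => Nat.gcd k n = 1), (-1 : ℤ) ^ (k - 1) * k) ∧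
    (Even n → 2 * (derivative (Fek n)).eval (-1) = (n : ℤ) * (n.totient : ℤ)) ∧
    (Odd n → 2 * (derivative (Fek n)).eval (-1) =
      (ArithmeticFunction.moebius n₀ : ℤ) * (n₀.totient : ℤ)) := by
  have key1 : (derivative (Fek n)).eval (-1) =
      ∑ k ∈ (Finset.Icc 1 n).filter (fun k => Nat.gcd k n = 1), (-1 : ℤ) ^ (k - 1) * k := by
      have hd : (derivative (Fek n)).eval (-1)
          = ∑ a ∈ Finset.range n, (if Nat.gcd a n = 1 then (-1 : ℤ) ^ (a - 1) * a else 0) := by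
        unfold Fek
        rw [derivative_sum, eval_finset_sum]
        refine Finset.sum_congr rfl fun a _ => ?_
        rw [apply_ite derivative, derivative_X_pow, derivative_zero, apply_ite (eval (-1 : ℤ)),
          eval_zero, eval_mul, eval_C, eval_pow, eval_X]
        split_ifs <;> ring
      rw [hd, Finset.sum_filter, Finset.range_eq_Ico,
        Finset.sum_eq_sum_Ico_succ_bot (by omega : 0 < n)]
      have h0 : (if Nat.gcd 0 n = 1 then (-1 : ℤ) ^ (0 - 1) * ((0 : ℕ) : ℤ) else 0) = 0 := by
        split_ifs <;> simp
      rw [h0, zero_add, ← Finset.Ico_add_one_right_eq_Icc, Finset.sum_Ico_succ_top (by omega : 1 ≤ n)]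
      have hnn : (if Nat.gcd n n = 1 then (-1 : ℤ) ^ (n - 1) * (n : ℤ) else 0) = 0 := by
        simp only [Nat.gcd_self]; rw [if_neg (by omega)]
      rw [hnn, add_zero]
  refine ⟨key1, fun hev => ?_, fun hodd => ?_⟩
  · rw [key1]
    set S := (Finset.Icc 1 n).filter (fun k => Nat.gcd k n = 1) with hS
    have hmem : ∀ k ∈ S, 1 ≤ k ∧ k < n ∧ Nat.gcd k n = 1 := by
      intro k hk
      simp only [hS, Finset.mem_filter, Finset.mem_Icc] at hk
      refine ⟨hk.1.1, ?_, hk.2⟩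
      rcases eq_or_lt_of_le hk.1.2 with rfl | h
      · rw [Nat.gcd_self] at hk; omega
      · exact h
    have hterm : ∀ k ∈ S, (-1 : ℤ) ^ (k - 1) * k = (k : ℤ) := by
      intro k hk
      obtain ⟨h1, h2, h3⟩ := hmem k hk
      have hodd : ¬ 2 ∣ k := by
        intro h2k
        have h2n : 2 ∣ n := hev.two_dvd
        have : 2 ∣ Nat.gcd k n := Nat.dvd_gcd h2k h2n
        omega
      have hek : Even (k - 1) := by
        rcases Nat.even_or_odd k with h | h
        · exact absurd h.two_dvd hodd
        · obtain ⟨t, ht⟩ := h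
          subst ht
          simp [Nat.add_sub_cancel]
      rw [Even.neg_one_pow hek, one_mul]
    rw [Finset.sum_congr rfl hterm]
    -- reflection
    have hrefl : ∑ k ∈ S, ((n - k : ℕ) : ℤ) = ∑ k ∈ S, (k : ℤ) := by
      apply Finset.sum_nbij' (i := fun k => n - k) (j := fun k => n - k)
      · intro k hk
        obtain ⟨h1, h2, h3⟩ := hmem k hk
        simp only [hS, Finset.mem_filter, Finset.mem_Icc]
        exact ⟨⟨by omega, by omega⟩, by rw [gcdSub n k (by omega)]; exact h3⟩
      · intro k hk
        obtain ⟨h1, h2, h3⟩ := hmem k hk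
        simp only [hS, Finset.mem_filter, Finset.mem_Icc]
        exact ⟨⟨by omega, by omega⟩, by rw [gcdSub n k (by omega)]; exact h3⟩
      · intro k hk; obtain ⟨h1, h2, h3⟩ := hmem k hk; omega
      · intro k hk; obtain ⟨h1, h2, h3⟩ := hmem k hk; omega
      · intro k hk; rfl
    have hcard : S.card = n.totient := by
      rw [Nat.totient_eq_card_coprime]
      congr 1
      ext k
      simp only [hS, Finset.mem_filter, Finset.mem_Icc, Finset.mem_range]
      constructor
      · rintro ⟨⟨h1, h2⟩, h3⟩
        refine ⟨?_, Nat.coprime_comm.mp h3⟩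
        rcases eq_or_lt_of_le h2 with rfl | h
        · rw [Nat.gcd_self] at h3; omega
        · exact h
      · rintro ⟨h1, h2⟩
        have h3 : Nat.gcd k n = 1 := Nat.coprime_comm.mp h2
        refine ⟨⟨?_, by omega⟩, h3⟩
        rcases Nat.eq_zero_or_pos k with rfl | h
        · rw [Nat.gcd_zero_left] at h3; omega
        · exact h
    have : 2 * ∑ k ∈ S, (k : ℤ) = ∑ k ∈ S, (((n - k : ℕ) : ℤ) + (k : ℤ)) := by
      rw [Finset.sum_add_distrib, hrefl]; ring
    rw [this]
    have hconst : ∀ k ∈ S, (((n - k : ℕ) : ℤ) + (k : ℤ)) = (n : ℤ) := by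
      intro k hk
      obtain ⟨h1, h2, h3⟩ := hmem k hk
      rw [Nat.cast_sub (by omega)]; ring
    rw [Finset.sum_congr rfl hconst, Finset.sum_const, hcard, nsmul_eq_mul, mul_comm]
  · rw [key1]
    have hn0 : n ≠ 0 := by omega
    have h2n : ¬ 2 ∣ n := by rcases hodd with ⟨t, ht⟩; omega
    have hsprime : ∀ p ∈ n.primeFactors, p.Prime := fun p hp => Nat.prime_of_mem_primeFactors hp
    have hrad0 : n₀ ≠ 0 := by
      rw [hn₀]; exact Finset.prod_ne_zero_iff.mpr fun p hp => (hsprime p hp).ne_zero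
    have hradpf : n₀.primeFactors = n.primeFactors := by
      rw [hn₀]; exact Nat.primeFactors_prod hsprime
    have hdvd : n₀ ∣ n := by rw [hn₀]; exact Nat.prod_primeFactors_dvd n
    have hn₀1 : n₀ ≠ 1 := by
      obtain ⟨p, hp1, hp2⟩ := Nat.exists_prime_and_dvd (by omega : n ≠ 1)
      have hpmem : p ∈ n.primeFactors := Nat.mem_primeFactors.mpr ⟨hp1, hp2, hn0⟩
      intro h1
      have hpd : p ∣ n₀ := hn₀ ▸ Finset.dvd_prod_of_mem _ hpmem
      rw [h1] at hpd
      have h2 := Nat.dvd_one.mp hpd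
      have h3 := hp1.two_le
      omega
    have hcop : ∀ k : ℕ, k ≠ 0 → (Nat.gcd k n = 1 ↔ Nat.gcd k n₀ = 1) := by
      intro k hk
      constructor
      · intro h
        exact (Nat.disjoint_primeFactors hk hrad0).mp
          (hradpf ▸ ((Nat.disjoint_primeFactors hk hn0).mpr h))
      · intro h
        exact (Nat.disjoint_primeFactors hk hn0).mp
          (hradpf.symm ▸ ((Nat.disjoint_primeFactors hk hrad0).mpr h))
    rw [Finset.sum_filter]
    have hA : ∀ k ∈ Finset.Icc 1 n,
        (if Nat.gcd k n = 1 then (-1 : ℤ) ^ (k - 1) * k else 0)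
          = ∑ d ∈ n₀.divisors, (if d ∣ k then (μ d : ℤ) * ((-1 : ℤ) ^ (k - 1) * k) else 0) := by
      intro k hk
      have hk0 : k ≠ 0 := by simp only [Finset.mem_Icc] at hk; omega
      have hsplit : ∑ d ∈ n₀.divisors, (if d ∣ k then (μ d : ℤ) * ((-1 : ℤ) ^ (k - 1) * k) else 0)
          = (∑ d ∈ n₀.divisors, if d ∣ k then (μ d : ℤ) else 0) * ((-1 : ℤ) ^ (k - 1) * k) := by
        rw [Finset.sum_mul]
        exact Finset.sum_congr rfl fun d _ => by split_ifs <;> ring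
      have hfe : n₀.divisors.filter (· ∣ k) = (Nat.gcd n₀ k).divisors := by
        ext d
        simp only [Finset.mem_filter, Nat.mem_divisors, Nat.dvd_gcd_iff]
        constructor
        · rintro ⟨⟨h1, _⟩, h2⟩
          exact ⟨⟨h1, h2⟩, fun hg => hrad0 (Nat.eq_zero_of_gcd_eq_zero_left hg)⟩
        · rintro ⟨⟨h1, h2⟩, _⟩
          exact ⟨⟨h1, hrad0⟩, h2⟩
      rw [hsplit, ← Finset.sum_filter, hfe, sumMoebius]
      have hiff : Nat.gcd n₀ k = 1 ↔ Nat.gcd k n = 1 := by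
        rw [Nat.gcd_comm]; exact (hcop k hk0).symm
      by_cases hc : Nat.gcd k n = 1
      · rw [if_pos hc, if_pos (hiff.mpr hc), one_mul]
      · rw [if_neg hc, if_neg (fun h => hc (hiff.mp h)), zero_mul]
    rw [Finset.sum_congr rfl hA, Finset.sum_comm]
    have hin : ∀ d ∈ n₀.divisors,
        (∑ k ∈ Finset.Icc 1 n, if d ∣ k then (μ d : ℤ) * ((-1 : ℤ) ^ (k - 1) * k) else 0)
          = (μ d : ℤ) * d * ∑ j ∈ Finset.Icc 1 (n / d), (-1 : ℤ) ^ (j - 1) * j := by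
      intro d hd
      obtain ⟨hdn₀, _⟩ := Nat.mem_divisors.mp hd
      have hddvd : d ∣ n := hdn₀.trans hdvd
      have hd0 : 0 < d := Nat.pos_of_mem_divisors hd
      have hdodd : ¬ 2 ∣ d := fun h2 => h2n (h2.trans hddvd)
      rw [← Finset.sum_filter]
      have hre : ∑ k ∈ (Finset.Icc 1 n).filter (d ∣ ·), (μ d : ℤ) * ((-1 : ℤ) ^ (k - 1) * k)
          = ∑ j ∈ Finset.Icc 1 (n / d), (μ d : ℤ) * ((-1 : ℤ) ^ (d * j - 1) * (d * j : ℕ)) := by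
        apply Finset.sum_nbij' (i := fun k => k / d) (j := fun j => d * j)
        · intro k hk
          simp only [Finset.mem_filter, Finset.mem_Icc] at hk ⊢
          obtain ⟨⟨hk1, hk2⟩, hkd⟩ := hk
          have hle : d ≤ k := Nat.le_of_dvd (by omega) hkd
          exact ⟨(Nat.one_le_div_iff hd0).mpr hle, Nat.div_le_div_right hk2⟩
        · intro j hj
          simp only [Finset.mem_filter, Finset.mem_Icc] at hj ⊢
          obtain ⟨hj1, hj2⟩ := hj
          refine ⟨⟨Nat.mul_pos hd0 (by omega), ?_⟩, dvd_mul_right d j⟩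
          calc d * j ≤ d * (n / d) := Nat.mul_le_mul_left d hj2
            _ = n := Nat.mul_div_cancel' hddvd
        · intro k hk
          simp only [Finset.mem_filter] at hk
          exact Nat.mul_div_cancel' hk.2
        · intro j _
          exact Nat.mul_div_cancel_left j hd0
        · intro k hk
          simp only [Finset.mem_filter] at hk
          rw [Nat.mul_div_cancel' hk.2]
      rw [hre, Finset.mul_sum]
      refine Finset.sum_congr rfl fun j hj => ?_
      simp only [Finset.mem_Icc] at hj
      rw [powOdd d j hdodd hj.1]
      push_cast
      ring
    rw [Finset.sum_congr rfl hin, Finset.mul_sum]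
    have hterm2 : ∀ d ∈ n₀.divisors,
        2 * ((μ d : ℤ) * d * ∑ j ∈ Finset.Icc 1 (n / d), (-1 : ℤ) ^ (j - 1) * j)
          = (n : ℤ) * (μ d : ℤ) + (μ d : ℤ) * d := by
      intro d hd
      obtain ⟨hdn₀, _⟩ := Nat.mem_divisors.mp hd
      have hddvd : d ∣ n := hdn₀.trans hdvd
      have hnd : ¬ Even (n / d) := fun he => h2n (he.two_dvd.trans (Nat.div_dvd_of_dvd hddvd))
      have hAS := altSum (n / d)
      rw [if_neg hnd] at hAS
      have hc : (d : ℤ) * ((n / d : ℕ) : ℤ) = (n : ℤ) := by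
        exact_mod_cast congrArg (Nat.cast (R := ℤ)) (Nat.mul_div_cancel' hddvd)
      linear_combination (μ d : ℤ) * (d : ℤ) * hAS + (μ d : ℤ) * hc
    rw [Finset.sum_congr rfl hterm2, Finset.sum_add_distrib, ← Finset.mul_sum,
      sumMoebius n₀, if_neg hn₀1, mul_zero, zero_add]
    have hsq : Squarefree n₀ := by
      rw [hn₀]; exact (radAux n.primeFactors hsprime).1
    have hprod := ArithmeticFunction.IsMultiplicative.prodPrimeFactors_one_sub_of_squarefree
      ((ArithmeticFunction.id : ArithmeticFunction ℕ) : ArithmeticFunction ℤ)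
      isMultiplicative_id.natCast hsq
    simp only [natCoe_apply, intCoe_apply, id_apply, Int.cast_id] at hprod
    rw [← hprod, hradpf, hn₀]
    exact (radAux n.primeFactors hsprime).2.symm
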